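/- arXiv:1003.3085 — 2 statements merged into one kernel-verified Lean document; each statement's English description precedes it below -/
import Mathlib

section
/- Let G be an undirected graph with distinct nodes s and t. For every collection P of pairwise edge-disjoint s–t paths in G there exists a balanced arc set F in G⃗ with val(F) = |P|; conversely, for every balanced arc set F in G⃗ there exists a collection of at least val(F) pairwise edge-disjoint s–t paths in G. Consequently, the maximum cardinality of a collection of pairwise edge-disjoint s–t paths in G equals the maximum value of a balanced arc set in G⃗. -/
/-!
We encode a multigraph on vertex type `V` with edge-index type `E` by a map
`G : E → V × V`: the edge with index `e` joins the (unordered) endpoints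
`(G e).1` and `(G e).2`.
-/

/-- The degree of `v` in the multigraph `G`: the number of edge-ends of `G`
incident to `v` (a loop counts twice). -/
noncomputable def mdeg {V E : Type} (G : E → V × V) (v : V) : ℕ :=
  Set.ncard {p : E × Bool | (cond p.2 (G p.1).1 (G p.1).2) = v}

/-- `mcut G U` is `d_G(U)`: the number of edges of `G` having exactly one
endpoint in `U`. -/
noncomputable def mcut {V E : Type} (G : E → V × V) (U : Set V) : ℕ :=
  Set.ncard {e : E | ((G e).1 ∈ U ∧ (G e).2 ∉ U) ∨ ((G e).2 ∈ U ∧ (G e).1 ∉ U)}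

/-- Walks in the multigraph `G`; an edge may be traversed in either direction. -/
inductive MWalk {V E : Type} (G : E → V × V) : V → V → Type where
  | nil (v : V) : MWalk G v v
  | cons {u v w : V} (e : E) (he : G e = (u, v) ∨ G e = (v, u)) (tail : MWalk G v w) :
      MWalk G u w

namespace MWalk
/-- The list of edges traversed by a walk. -/
def edges {V E : Type} {G : E → V × V} : {u v : V} → MWalk G u v → List E
  | _, _, nil _ => []
  | _, _, cons e _ p => e :: p.edges
end MWalk

/-- An instance `(G, H)` (`H` is the demand multigraph, on the same vertex set)
is feasible if the demand edges can be routed by pairwise edge-disjoint paths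
of `G`: for each demand edge `i` there is a walk of `G` connecting its two
endpoints, the walks being pairwise edge-disjoint. -/
def MFeasible {V E E' : Type} (G : E → V × V) (H : E' → V × V) : Prop :=
  ∃ P : (i : E') → MWalk G (H i).1 (H i).2,
    ∀ i j : E', i ≠ j → List.Disjoint (P i).edges (P j).edges

/-- The multigraph `G` is connected (all of its vertex set lies in one
connected component). -/
def MConnected {V E : Type} (G : E → V × V) : Prop :=
  ∀ u v : V, Nonempty (MWalk G u v)

/-- The subgraph `G[U]` induced by `U` is connected: any two vertices of `U`
are joined by a walk all of whose edges have both endpoints in `U`. -/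
def MInducedConnected {V E : Type} (G : E → V × V) (U : Set V) : Prop :=
  ∀ u ∈ U, ∀ v ∈ U, ∃ p : MWalk G u v, ∀ e ∈ p.edges, (G e).1 ∈ U ∧ (G e).2 ∈ U

/-- The instance `(G, H)` is Eulerian: every vertex of `G + H` has even degree. -/
def MEulerian {V E E' : Type} (G : E → V × V) (H : E' → V × V) : Prop :=
  ∀ v : V, Even (mdeg G v + mdeg H v)

/-!
The digraph `G⃗` associated with the multigraph `G : E → V × V` has the arc set
`E × Bool`: the arc `(e, true)` traverses edge `e` from `(G e).1` to `(G e).2`,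
and `(e, false)` is the oppositely directed arc.
-/

/-- The tail of an arc of `G⃗`. -/
def arcTail {V E : Type} (G : E → V × V) (a : E × Bool) : V :=
  cond a.2 (G a.1).1 (G a.1).2

/-- The head of an arc of `G⃗`. -/
def arcHead {V E : Type} (G : E → V × V) (a : E × Bool) : V :=
  cond a.2 (G a.1).2 (G a.1).1

/-- The reverse arc `a⁻¹`. -/
def arcInv {E : Type} (a : E × Bool) : E × Bool := (a.1, !a.2)

/-- `|F ∩ δ^out(v)|`, the number of arcs of `F` leaving `v`. -/
noncomputable def outCount {V E : Type} (G : E → V × V) (F : Finset (E × Bool)) (v : V) : ℕ :=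
  Set.ncard {a : E × Bool | a ∈ F ∧ arcTail G a = v}

/-- `|F ∩ δ^in(v)|`, the number of arcs of `F` entering `v`. -/
noncomputable def inCount {V E : Type} (G : E → V × V) (F : Finset (E × Bool)) (v : V) : ℕ :=
  Set.ncard {a : E × Bool | a ∈ F ∧ arcHead G a = v}

/-- `F ⊆ AG⃗` is balanced (w.r.t. the source `s` and the sink `t`) if
`|F ∩ δ^in(v)| = |F ∩ δ^out(v)|` for every `v ∈ VG − {s, t}`. -/
def BalancedArcs {V E : Type} (G : E → V × V) (s t : V) (F : Finset (E × Bool)) : Prop :=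
  ∀ v : V, v ≠ s → v ≠ t → inCount G F v = outCount G F v

/-- The value `val(F) = |F ∩ δ^out(s)| − |F ∩ δ^in(s)|` of an arc set. -/
noncomputable def bval {V E : Type} (G : E → V × V) (s : V) (F : Finset (E × Bool)) : ℤ :=
  (outCount G F s : ℤ) - (inCount G F s : ℤ)

/-- Directed walks in `G⃗`. -/
inductive DWalk {V E : Type} (G : E → V × V) : V → V → Type where
  | nil (v : V) : DWalk G v v
  | cons {u v w : V} (a : E × Bool) (ht : arcTail G a = u) (hh : arcHead G a = v)
      (tail : DWalk G v w) : DWalk G u w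

namespace DWalk
/-- The list of arcs traversed by a directed walk. -/
def arcs {V E : Type} {G : E → V × V} : {u v : V} → DWalk G u v → List (E × Bool)
  | _, _, nil _ => []
  | _, _, cons a _ _ p => a :: p.arcs
end DWalk

/-- The arcs of the residual digraph `G⃗_F = (VG, (AG⃗ − F) ∪ F⁻¹)`. -/
def residArcs {E : Type} (F : Finset (E × Bool)) : Set (E × Bool) :=
  {a | a ∉ F ∨ arcInv a ∈ F}


/-! ### Auxiliary development for statement9 -/

section Statement9Aux

open scoped Classical

variable {V E : Type}

@[simp] lemma arcInv_inv {E : Type} (a : E × Bool) : arcInv (arcInv a) = a := by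
  cases a with
  | mk e b => cases b <;> rfl

@[simp] lemma arcTail_inv (G : E → V × V) (a : E × Bool) :
    arcTail G (arcInv a) = arcHead G a := by
  cases a with
  | mk e b => cases b <;> rfl

@[simp] lemma arcHead_inv (G : E → V × V) (a : E × Bool) :
    arcHead G (arcInv a) = arcTail G a := by
  cases a with
  | mk e b => cases b <;> rfl

/-- number of arcs in the list with tail `v`. -/
noncomputable def tcnt (G : E → V × V) (v : V) (L : List (E × Bool)) : ℕ :=
  L.countP (fun a => decide (arcTail G a = v))

/-- number of arcs in the list with head `v`. -/
noncomputable def hcnt (G : E → V × V) (v : V) (L : List (E × Bool)) : ℕ :=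
  L.countP (fun a => decide (arcHead G a = v))

@[simp] lemma tcnt_nil (G : E → V × V) (v : V) : tcnt G v [] = 0 := rfl
@[simp] lemma hcnt_nil (G : E → V × V) (v : V) : hcnt G v [] = 0 := rfl

lemma tcnt_cons (G : E → V × V) (v : V) (a : E × Bool) (L : List (E × Bool)) :
    tcnt G v (a :: L) = tcnt G v L + (if arcTail G a = v then 1 else 0) := by
  simp [tcnt, List.countP_cons]

lemma hcnt_cons (G : E → V × V) (v : V) (a : E × Bool) (L : List (E × Bool)) :
    hcnt G v (a :: L) = hcnt G v L + (if arcHead G a = v then 1 else 0) := by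
  simp [hcnt, List.countP_cons]

lemma outCount_eq_card (G : E → V × V) (F : Finset (E × Bool)) (v : V) :
    outCount G F v = (F.filter fun a => arcTail G a = v).card := by
  rw [outCount,
    show {a : E × Bool | a ∈ F ∧ arcTail G a = v}
        = ((F.filter fun a => arcTail G a = v) : Finset (E × Bool)) by
      ext a; simp [Finset.mem_filter]]
  exact Set.ncard_coe_finset _

lemma inCount_eq_card (G : E → V × V) (F : Finset (E × Bool)) (v : V) :
    inCount G F v = (F.filter fun a => arcHead G a = v).card := by
  rw [inCount,
    show {a : E × Bool | a ∈ F ∧ arcHead G a = v}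
        = ((F.filter fun a => arcHead G a = v) : Finset (E × Bool)) by
      ext a; simp [Finset.mem_filter]]
  exact Set.ncard_coe_finset _

lemma card_filter_toFinset (p : E × Bool → Prop) [DecidablePred p]
    (L : List (E × Bool)) (h : L.Nodup) :
    (L.toFinset.filter p).card = L.countP (fun a => decide (p a)) := by
  induction L with
  | nil => simp
  | cons a L ih =>
    rw [List.nodup_cons] at h
    rw [List.toFinset_cons, Finset.filter_insert, List.countP_cons]
    by_cases hp : p a
    · rw [if_pos hp, Finset.card_insert_of_notMem
        (fun hmem => h.1 (List.mem_toFinset.mp (Finset.filter_subset _ _ hmem)))]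
      simp [hp, ih h.2]
    · simp [hp, ih h.2]

lemma outCount_toFinset (G : E → V × V) (L : List (E × Bool)) (h : L.Nodup) (v : V) :
    outCount G L.toFinset v = tcnt G v L := by
  rw [outCount_eq_card, card_filter_toFinset _ _ h]; rfl

lemma inCount_toFinset (G : E → V × V) (L : List (E × Bool)) (h : L.Nodup) (v : V) :
    inCount G L.toFinset v = hcnt G v L := by
  rw [inCount_eq_card, card_filter_toFinset _ _ h]; rfl

lemma card_filter_sdiff (p : E × Bool → Prop) [DecidablePred p]
    {S F : Finset (E × Bool)} (h : S ⊆ F) :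
    (F.filter p).card = ((F \ S).filter p).card + (S.filter p).card := by
  conv_lhs => rw [← Finset.sdiff_union_of_subset h]
  rw [Finset.filter_union, Finset.card_union_of_disjoint]
  exact Finset.disjoint_filter_filter Finset.sdiff_disjoint

lemma outCount_sdiff (G : E → V × V) {S F : Finset (E × Bool)} (h : S ⊆ F) (v : V) :
    outCount G F v = outCount G (F \ S) v + outCount G S v := by
  rw [outCount_eq_card, outCount_eq_card, outCount_eq_card]
  exact card_filter_sdiff _ h

lemma inCount_sdiff (G : E → V × V) {S F : Finset (E × Bool)} (h : S ⊆ F) (v : V) :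
    inCount G F v = inCount G (F \ S) v + inCount G S v := by
  rw [inCount_eq_card, inCount_eq_card, inCount_eq_card]
  exact card_filter_sdiff _ h

lemma card_filter_erase (p : E × Bool → Prop) [DecidablePred p]
    {a : E × Bool} {F : Finset (E × Bool)} (h : a ∈ F) :
    (F.filter p).card = ((F.erase a).filter p).card + (if p a then 1 else 0) := by
  conv_lhs => rw [← Finset.insert_erase h]
  rw [Finset.filter_insert]
  by_cases hp : p a
  · rw [if_pos hp, if_pos hp, Finset.card_insert_of_notMem
      (fun hmem => (Finset.mem_erase.mp (Finset.filter_subset _ _ hmem)).1 rfl)]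
  · rw [if_neg hp, if_neg hp, Nat.add_zero]

lemma outCount_erase (G : E → V × V) {a : E × Bool} {F : Finset (E × Bool)}
    (h : a ∈ F) (v : V) :
    outCount G F v = outCount G (F.erase a) v + (if arcTail G a = v then 1 else 0) := by
  rw [outCount_eq_card, outCount_eq_card]; exact card_filter_erase _ h

lemma inCount_erase (G : E → V × V) {a : E × Bool} {F : Finset (E × Bool)}
    (h : a ∈ F) (v : V) :
    inCount G F v = inCount G (F.erase a) v + (if arcHead G a = v then 1 else 0) := by
  rw [inCount_eq_card, inCount_eq_card]; exact card_filter_erase _ h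

/-- A symmetric (inverse-closed) arc set has equal in- and out-counts everywhere. -/
lemma symm_outCount_eq_inCount (G : E → V × V) (S : Finset (E × Bool))
    (h : ∀ a ∈ S, arcInv a ∈ S) (v : V) :
    outCount G S v = inCount G S v := by
  rw [outCount_eq_card, inCount_eq_card]
  apply Finset.card_bij (fun a _ => arcInv a)
  · intro a ha
    rw [Finset.mem_filter] at ha ⊢
    exact ⟨h a ha.1, by simp [ha.2]⟩
  · intro a ha b hb hab
    have := congrArg arcInv hab
    simpa using this
  · intro b hb
    rw [Finset.mem_filter] at hb
    refine ⟨arcInv b, Finset.mem_filter.mpr ⟨h b hb.1, by simp [hb.2]⟩, by simp⟩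

/-- The key counting identity for a directed walk. -/
lemma DWalk.count_arcs {G : E → V × V} {u v : V} (p : DWalk G u v) (w : V) :
    (tcnt G w p.arcs : ℤ) - (hcnt G w p.arcs : ℤ)
      = (if u = w then 1 else 0) - (if v = w then 1 else 0) := by
  induction p with
  | nil x => simp [DWalk.arcs]
  | cons a ht hh q ih =>
    rename_i x y z
    rw [DWalk.arcs, tcnt_cons, hcnt_cons, ht, hh]
    push_cast
    by_cases h1 : x = w <;> by_cases h2 : y = w <;> by_cases h3 : z = w <;>
      simp only [h1, h2, h3, if_true, if_false] at ih ⊢ <;>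
      simp [h1, h2, h3] at ih ⊢ <;> omega

/-- Converting a multigraph walk to a directed walk. -/
noncomputable def MWalk.toD {G : E → V × V} : {u v : V} → MWalk G u v → DWalk G u v
  | _, _, .nil v => .nil v
  | u, _, .cons (v := x) e he p =>
      if h : G e = (u, x) then
        .cons (e, true) (by simp [arcTail, h]) (by simp [arcHead, h]) p.toD
      else
        .cons (e, false) (by simp [arcTail, he.resolve_left h])
          (by simp [arcHead, he.resolve_left h]) p.toD

lemma MWalk.toD_arcs_map {G : E → V × V} : ∀ {u v : V} (p : MWalk G u v),
    p.toD.arcs.map Prod.fst = p.edges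
  | _, _, .nil v => rfl
  | u, _, .cons (v := x) e he p => by
    rw [MWalk.toD]
    split <;> simp [DWalk.arcs, MWalk.edges, MWalk.toD_arcs_map p]

/-- Converting a directed walk to a multigraph walk. -/
def DWalk.toM {G : E → V × V} : {u v : V} → DWalk G u v → MWalk G u v
  | _, _, .nil v => .nil v
  | _, _, .cons (u := u) (v := x) a ht hh p =>
      .cons a.1
        (by
          cases a with
          | mk e b =>
            cases b with
            | true =>
              left
              simp [arcTail] at ht; simp [arcHead] at hh
              exact Prod.ext ht hh
            | false =>
              right
              simp [arcTail] at ht; simp [arcHead] at hh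
              exact Prod.ext hh ht)
        p.toM

lemma DWalk.toM_edges {G : E → V × V} : ∀ {u v : V} (p : DWalk G u v),
    p.toM.edges = p.arcs.map Prod.fst
  | _, _, .nil v => rfl
  | _, _, .cons a ht hh p => by
    rw [DWalk.toM]
    simp [MWalk.edges, DWalk.arcs, DWalk.toM_edges p]

/-- Extraction of a directed trail from `u` to `t` inside `F`. -/
lemma extract_walk (G : E → V × V) (t : V) :
    ∀ (N : ℕ) (F : Finset (E × Bool)) (u : V), F.card ≤ N →
      inCount G F u < outCount G F u →
      (∀ v, v ≠ u → v ≠ t → inCount G F v ≤ outCount G F v) →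
      ∃ p : DWalk G u t, p.arcs.Nodup ∧ ∀ a ∈ p.arcs, a ∈ F := by
  intro N
  induction N with
  | zero =>
    intro F u hF hu _
    rw [Nat.le_zero, Finset.card_eq_zero] at hF
    subst hF
    rw [outCount_eq_card, inCount_eq_card] at hu
    simp at hu
  | succ N ih =>
    intro F u hF hu hbal
    by_cases hut : u = t
    · subst hut
      refine ⟨.nil u, ?_, ?_⟩ <;> simp [DWalk.arcs]
    · have hpos : 0 < (F.filter fun a => arcTail G a = u).card := by
        rw [← outCount_eq_card]; omega
      obtain ⟨a, ha⟩ := Finset.card_pos.mp hpos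
      rw [Finset.mem_filter] at ha
      by_cases hvt : arcHead G a = t
      · refine ⟨.cons a ha.2 hvt (.nil t), by simp [DWalk.arcs], ?_⟩
        intro b hb
        rw [DWalk.arcs, DWalk.arcs, List.mem_cons] at hb
        rcases hb with hb | hb
        · exact hb ▸ ha.1
        · simp at hb
      · set v := arcHead G a with hv
        have hcard : (F.erase a).card ≤ N := by
          rw [Finset.card_erase_of_mem ha.1]
          omega
        have oU := outCount_erase G ha.1 u
        have iU := inCount_erase G ha.1 u
        have oV := outCount_erase G ha.1 v
        have iV := inCount_erase G ha.1 v
        rw [if_pos ha.2] at oU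
        rw [if_pos hv.symm] at iV
        have h1 : inCount G (F.erase a) v < outCount G (F.erase a) v := by
          by_cases huv : v = u
          · subst huv
            omega
          · have hb := hbal v huv hvt
            rw [if_neg (fun hh : arcTail G a = v => huv (hh.symm.trans ha.2))] at oV
            omega
        have h2 : ∀ w, w ≠ v → w ≠ t → inCount G (F.erase a) w ≤ outCount G (F.erase a) w := by
          intro w hwv hwt
          have oW := outCount_erase G ha.1 w
          have iW := inCount_erase G ha.1 w
          rw [if_neg (fun hh : arcHead G a = w => hwv (hh ▸ hv))] at iW
          by_cases hwu : w = u
          · subst hwu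
            rw [if_pos ha.2] at oW
            omega
          · have hb := hbal w hwu hwt
            rw [if_neg (fun hh : arcTail G a = w => hwu (hh.symm.trans ha.2))] at oW
            omega
        obtain ⟨p, hnd, hmem⟩ := ih (F.erase a) v hcard h1 h2
        refine ⟨.cons a ha.2 hv.symm p, ?_, ?_⟩
        · rw [DWalk.arcs, List.nodup_cons]
          exact ⟨fun h => (Finset.mem_erase.mp (hmem a h)).1 rfl, hnd⟩
        · intro b hb
          rw [DWalk.arcs, List.mem_cons] at hb
          rcases hb with hb | hb
          · exact hb ▸ ha.1
          · exact Finset.mem_of_mem_erase (hmem b hb)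

/-- Core of the converse direction: path extraction from a balanced arc set
containing no pair of opposite arcs. -/
lemma part2core (G : E → V × V) (s t : V) (hst : s ≠ t) :
    ∀ (N : ℕ) (F : Finset (E × Bool)), F.card ≤ N →
      BalancedArcs G s t F → (∀ a ∈ F, arcInv a ∉ F) →
      ∃ (n : ℕ) (P : Fin n → DWalk G s t),
        (∀ i, (P i).arcs.Nodup) ∧
        (∀ i, ∀ a ∈ (P i).arcs, a ∈ F) ∧
        (∀ i j, i ≠ j → List.Disjoint (P i).arcs (P j).arcs) ∧
        bval G s F ≤ (n : ℤ) := by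
  intro N
  induction N with
  | zero =>
    intro F hF _ _
    rw [Nat.le_zero, Finset.card_eq_zero] at hF
    subst hF
    refine ⟨0, Fin.elim0, fun i => i.elim0, fun i => i.elim0, fun i => i.elim0, ?_⟩
    rw [bval, outCount_eq_card, inCount_eq_card]
    simp
  | succ N ih =>
    intro F hF hbal hni
    by_cases hv : bval G s F ≤ 0
    · exact ⟨0, Fin.elim0, fun i => i.elim0, fun i => i.elim0, fun i => i.elim0, by
        simpa using hv⟩
    · push_neg at hv
      have hs : inCount G F s < outCount G F s := by
        rw [bval] at hv; omega
      obtain ⟨p, hnd, hmem⟩ := extract_walk G t (N + 1) F s hF hs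
        (fun v hvs hvt => le_of_eq (hbal v hvs hvt))
      have hsub : p.arcs.toFinset ⊆ F := fun a ha => hmem a (List.mem_toFinset.mp ha)
      set F' := F \ p.arcs.toFinset with hF'
      have hOut : ∀ w, outCount G F w = outCount G F' w + tcnt G w p.arcs := by
        intro w
        rw [outCount_sdiff G hsub w, outCount_toFinset G _ hnd]
      have hIn : ∀ w, inCount G F w = inCount G F' w + hcnt G w p.arcs := by
        intro w
        rw [inCount_sdiff G hsub w, inCount_toFinset G _ hnd]
      -- the walk is nonempty
      have hpne : p.arcs ≠ [] := by
        cases p with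
        | nil => exact absurd rfl hst
        | cons a ht hh q => simp [DWalk.arcs]
      have hcard' : F'.card ≤ N := by
        obtain ⟨a, L, haL⟩ := List.exists_cons_of_ne_nil hpne
        have haF : a ∈ F := hmem a (by rw [haL]; exact List.mem_cons_self)
        have : F' ⊂ F := by
          refine Finset.ssubset_iff_of_subset (Finset.sdiff_subset) |>.mpr ?_
          exact ⟨a, haF, by simp [hF', haL]⟩
        have := Finset.card_lt_card this
        omega
      have hbal' : BalancedArcs G s t F' := by
        intro w hws hwt
        have hc := p.count_arcs w
        rw [if_neg (fun h => hws h.symm), if_neg (fun h => hwt h.symm)] at hc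
        have h1 := hOut w
        have h2 := hIn w
        have h3 := hbal w hws hwt
        omega
      have hbv' : bval G s F' = bval G s F - 1 := by
        have hc := p.count_arcs s
        rw [if_pos rfl, if_neg (fun h => hst h.symm)] at hc
        have h1 := hOut s
        have h2 := hIn s
        rw [bval, bval]
        omega
      have hni' : ∀ a ∈ F', arcInv a ∉ F' :=
        fun a ha h => hni a (Finset.mem_sdiff.mp ha).1 (Finset.mem_sdiff.mp h).1
      obtain ⟨n, Q, hQnd, hQmem, hQdisj, hQbv⟩ := ih F' hcard' hbal' hni'
      refine ⟨n + 1, Fin.cases p Q, ?_, ?_, ?_, ?_⟩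
      · intro i
        induction i using Fin.cases with
        | zero => simpa using hnd
        | succ j => simpa using hQnd j
      · intro i
        induction i using Fin.cases with
        | zero => simpa using hmem
        | succ j =>
          intro a ha
          have := hQmem j a (by simpa using ha)
          exact (Finset.mem_sdiff.mp this).1
      · have key : ∀ j, List.Disjoint p.arcs (Q j).arcs := by
          intro j a hap haq
          have := hQmem j a haq
          rw [Finset.mem_sdiff] at this
          exact this.2 (List.mem_toFinset.mpr hap)
        intro i j hij
        induction i using Fin.cases with
        | zero =>
          induction j using Fin.cases with
          | zero => exact absurd rfl hij
          | succ j' => simpa using key j'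
        | succ i' =>
          induction j using Fin.cases with
          | zero =>
            simp only [Fin.cases_zero, Fin.cases_succ]
            exact (key i').symm
          | succ j' =>
            simp only [Fin.cases_succ]
            exact hQdisj i' j' (fun h => hij (by rw [h]))
      · push_cast
        omega

end Statement9Aux

/-- For every collection of pairwise edge-disjoint `s`–`t`
paths in `G` there is a balanced arc set of `G⃗` whose value is the size of the
collection; conversely, every balanced arc set `F` yields at least `val F`
pairwise edge-disjoint `s`–`t` paths in `G`. Consequently, the maximum
cardinality of a collection of pairwise edge-disjoint `s`–`t` paths in `G`
equals the maximum value of a balanced arc set in `G⃗`. -/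
theorem statement9 {V E : Type} [Fintype E]
    (G : E → V × V) (s t : V) (hst : s ≠ t) :
    (∀ (n : ℕ) (P : Fin n → MWalk G s t),
        (∀ i, (P i).edges.Nodup) →
        (∀ i j, i ≠ j → List.Disjoint (P i).edges (P j).edges) →
        ∃ F : Finset (E × Bool), BalancedArcs G s t F ∧ bval G s F = n) ∧
    (∀ F : Finset (E × Bool), BalancedArcs G s t F →
        ∃ (n : ℕ) (P : Fin n → MWalk G s t),
          (∀ i, (P i).edges.Nodup) ∧
          (∀ i j, i ≠ j → List.Disjoint (P i).edges (P j).edges) ∧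
          bval G s F ≤ (n : ℤ)) ∧
    (∀ n : ℕ,
      IsGreatest {k : ℕ | ∃ P : Fin k → MWalk G s t,
          (∀ i, (P i).edges.Nodup) ∧
          ∀ i j, i ≠ j → List.Disjoint (P i).edges (P j).edges} n ↔
        IsGreatest {z : ℤ | ∃ F : Finset (E × Bool),
          BalancedArcs G s t F ∧ bval G s F = z} (n : ℤ)) := by
  classical
  -- Part 1
  have H1 : ∀ (n : ℕ) (P : Fin n → MWalk G s t),
      (∀ i, (P i).edges.Nodup) →
      (∀ i j, i ≠ j → List.Disjoint (P i).edges (P j).edges) →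
      ∃ F : Finset (E × Bool), BalancedArcs G s t F ∧ bval G s F = n := by
    intro n P hnd hdisj
    set A : Fin n → List (E × Bool) := fun i => (P i).toD.arcs with hA
    have hmapA : ∀ i, (A i).map Prod.fst = (P i).edges := fun i => MWalk.toD_arcs_map (P i)
    have hAnd : ∀ i, (A i).Nodup := by
      intro i
      apply List.Nodup.of_map Prod.fst
      rw [hmapA i]
      exact hnd i
    have hAdisj : ∀ i j, i ≠ j → List.Disjoint (A i) (A j) := by
      intro i j hij a hai haj
      exact hdisj i j hij (hmapA i ▸ List.mem_map_of_mem (f := Prod.fst) hai)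
        (hmapA j ▸ List.mem_map_of_mem (f := Prod.fst) haj)
    set L : List (E × Bool) := (List.ofFn A).flatten with hL
    have hLnd : L.Nodup := by
      rw [hL, List.nodup_flatten]
      constructor
      · intro l hl
        obtain ⟨i, rfl⟩ := (List.mem_ofFn (f := A) (a := l)).mp hl
        exact hAnd i
      · rw [List.pairwise_ofFn]
        intro i j hij
        exact hAdisj i j (ne_of_lt hij)
    have hT : ∀ w, tcnt G w L = ∑ i, tcnt G w (A i) := by
      intro w
      rw [hL, tcnt, List.countP_flatten, List.map_ofFn, List.sum_ofFn]
      rfl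
    have hH : ∀ w, hcnt G w L = ∑ i, hcnt G w (A i) := by
      intro w
      rw [hL, hcnt, List.countP_flatten, List.map_ofFn, List.sum_ofFn]
      rfl
    refine ⟨L.toFinset, ?_, ?_⟩
    · intro w hws hwt
      rw [outCount_toFinset G _ hLnd, inCount_toFinset G _ hLnd, hT, hH]
      refine Finset.sum_congr rfl fun i _ => ?_
      have hc : (tcnt G w (A i) : ℤ) - (hcnt G w (A i) : ℤ)
          = (if s = w then 1 else 0) - (if t = w then 1 else 0) := ((P i).toD).count_arcs w
      rw [if_neg (fun h => hws h.symm), if_neg (fun h => hwt h.symm)] at hc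
      omega
    · rw [bval, outCount_toFinset G _ hLnd, inCount_toFinset G _ hLnd, hT, hH]
      push_cast
      rw [← Finset.sum_sub_distrib]
      have : ∀ i : Fin n, ((tcnt G s (A i) : ℤ) - (hcnt G s (A i) : ℤ)) = 1 := by
        intro i
        have hc : (tcnt G s (A i) : ℤ) - (hcnt G s (A i) : ℤ)
            = (if s = s then 1 else 0) - (if t = s then 1 else 0) := ((P i).toD).count_arcs s
        rw [if_pos rfl, if_neg (fun h => hst h.symm)] at hc
        omega
      rw [Finset.sum_congr rfl fun i _ => this i]
      simp
  -- Part 2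
  have H2 : ∀ F : Finset (E × Bool), BalancedArcs G s t F →
      ∃ (n : ℕ) (P : Fin n → MWalk G s t),
        (∀ i, (P i).edges.Nodup) ∧
        (∀ i j, i ≠ j → List.Disjoint (P i).edges (P j).edges) ∧
        bval G s F ≤ (n : ℤ) := by
    intro F hbal
    set F1 := F.filter (fun a => arcInv a ∉ F) with hF1
    set F2 := F.filter (fun a => arcInv a ∈ F) with hF2
    have hF2sub : F2 ⊆ F := Finset.filter_subset _ _
    have hFdiff : F \ F2 = F1 := by
      ext a
      simp [hF1, hF2]
      tauto
    have hsymm : ∀ a ∈ F2, arcInv a ∈ F2 := by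
      intro a ha
      rw [hF2, Finset.mem_filter] at ha ⊢
      exact ⟨ha.2, by simpa using ha.1⟩
    have hEq := symm_outCount_eq_inCount G F2 hsymm
    have hOut : ∀ w, outCount G F w = outCount G F1 w + outCount G F2 w := by
      intro w
      rw [outCount_sdiff G hF2sub w, hFdiff]
    have hIn : ∀ w, inCount G F w = inCount G F1 w + inCount G F2 w := by
      intro w
      rw [inCount_sdiff G hF2sub w, hFdiff]
    have hbal1 : BalancedArcs G s t F1 := by
      intro w hws hwt
      have h1 := hOut w
      have h2 := hIn w
      have h3 := hbal w hws hwt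
      have h4 := hEq w
      omega
    have hbv1 : bval G s F1 = bval G s F := by
      have h1 := hOut s
      have h2 := hIn s
      have h4 := hEq s
      rw [bval, bval]
      omega
    have hninv : ∀ a ∈ F1, arcInv a ∉ F1 := by
      intro a ha h
      rw [hF1, Finset.mem_filter] at ha
      exact ha.2 (Finset.filter_subset _ _ h)
    have inj : ∀ a ∈ F1, ∀ b ∈ F1, a.1 = b.1 → a = b := by
      rintro ⟨e1, b1⟩ ha ⟨e2, b2⟩ hb h1
      cases h1
      cases b1 <;> cases b2 <;>
        first
          | rfl
          | (exfalso; exact hninv _ ha (by simpa [arcInv] using hb))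
    obtain ⟨n, Q, hQnd, hQmem, hQdisj, hQbv⟩ :=
      part2core G s t hst F1.card F1 le_rfl hbal1 hninv
    refine ⟨n, fun i => (Q i).toM, ?_, ?_, ?_⟩
    · intro i
      rw [DWalk.toM_edges]
      refine List.Nodup.map_on ?_ (hQnd i)
      intro a ha b hb hab
      exact inj a (hQmem i a ha) b (hQmem i b hb) hab
    · intro i j hij e hei hej
      rw [DWalk.toM_edges] at hei hej
      obtain ⟨a, ha, rfl⟩ := List.mem_map.mp hei
      obtain ⟨b, hb, hab⟩ := List.mem_map.mp hej
      have : b = a := inj b (hQmem j b hb) a (hQmem i a ha) hab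
      subst this
      exact hQdisj i j hij ha hb
    · rw [← hbv1]
      exact hQbv
  refine ⟨H1, H2, ?_⟩
  -- Part 3
  intro n
  constructor
  · rintro ⟨⟨P, hnd, hdisj⟩, hub⟩
    constructor
    · obtain ⟨F, hF, hFv⟩ := H1 n P hnd hdisj
      exact ⟨F, hF, hFv⟩
    · rintro z ⟨F, hbal, rfl⟩
      obtain ⟨m, Q, h1, h2, h3⟩ := H2 F hbal
      have hm : m ≤ n := hub ⟨Q, h1, h2⟩
      calc bval G s F ≤ (m : ℤ) := h3
        _ ≤ (n : ℤ) := by exact_mod_cast hm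
  · rintro ⟨⟨F, hbal, hFv⟩, hub⟩
    have hub' : ∀ k : ℕ, (∃ P : Fin k → MWalk G s t,
        (∀ i, (P i).edges.Nodup) ∧
        ∀ i j, i ≠ j → List.Disjoint (P i).edges (P j).edges) → k ≤ n := by
      rintro k ⟨P, h1, h2⟩
      obtain ⟨F', hF', hv'⟩ := H1 k P h1 h2
      exact_mod_cast hub ⟨F', hF', hv'⟩
    obtain ⟨m, Q, h1, h2, h3⟩ := H2 F hbal
    have hmn : m ≤ n := hub' m ⟨Q, h1, h2⟩
    have hnm : (n : ℤ) ≤ (m : ℤ) := hFv ▸ h3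
    have hmeq : m = n := le_antisymm hmn (by exact_mod_cast hnm)
    exact ⟨hmeq ▸ ⟨Q, h1, h2⟩, hub'⟩
end

section
/- Let (G,H) be a feasible Eulerian instance with three pairs of terminals and terminal set T = {s1,s2,s3,t1,t2,t3}, with G connected, and let p, q ∈ T. Suppose there exists some subset U' ⊆ VG with d_G(U') = d_H(U') = 2, G[U'] connected, and U' ∩ T = {p,q}. Let U be an inclusion-wise maximal set among all sets W ⊆ VG with W ∩ T = {p,q} and d_G(W) = 2. Then the induced subgraph G[U] is connected. -/
open scoped Classical

section Aux
variable {V E : Type}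

/-- The endpoint map of an edge-end. -/
noncomputable def ept (K : E → V × V) (p : E × Bool) : V :=
  cond p.2 (K p.1).1 (K p.1).2

/-- The set of edges crossing `W`. -/
def crossSet (K : E → V × V) (W : Set V) : Set E :=
  {e | ((K e).1 ∈ W ∧ (K e).2 ∉ W) ∨ ((K e).2 ∈ W ∧ (K e).1 ∉ W)}

lemma mcut_eq_ncard (K : E → V × V) (W : Set V) : mcut K W = (crossSet K W).ncard := rfl

lemma mdeg_eq [Fintype E] (K : E → V × V) (v : V) :
    mdeg K v = (Finset.univ.filter fun p : E × Bool => ept K p = v).card := by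
  rw [mdeg, ← Set.ncard_coe_finset]
  congr 1
  ext p
  rw [Finset.mem_coe, Finset.mem_filter]
  simp [ept]

lemma mcut_eq_card [Fintype E] (K : E → V × V) (W : Set V) :
    mcut K W = (Finset.univ.filter fun e : E =>
      ((K e).1 ∈ W ∧ (K e).2 ∉ W) ∨ ((K e).2 ∈ W ∧ (K e).1 ∉ W)).card := by
  rw [mcut, ← Set.ncard_coe_finset]
  congr 1
  ext e
  simp

lemma mcut_submod [Fintype E] (K : E → V × V) (A B : Set V) :
    mcut K (A ∪ B) + mcut K (A ∩ B) ≤ mcut K A + mcut K B := by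
  simp only [mcut_eq_card, Finset.card_filter, ← Finset.sum_add_distrib]
  apply Finset.sum_le_sum
  intro e _
  by_cases h1 : (K e).1 ∈ A <;> by_cases h2 : (K e).1 ∈ B <;>
    by_cases h3 : (K e).2 ∈ A <;> by_cases h4 : (K e).2 ∈ B <;>
    simp [h1, h2, h3, h4]

end Aux

section Par
variable {V E E' : Type}

lemma ends_parity [Fintype E] (K : E → V × V) (W : Set V) :
    (Finset.univ.filter fun p : E × Bool => ept K p ∈ W).card % 2 = mcut K W % 2 := by
  have hsplit :
      (Finset.univ.filter fun p : E × Bool => ept K p ∈ W).card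
        = (Finset.univ.filter fun p : E × Bool =>
              (ept K p ∈ W) ∧ ept K (p.1, !p.2) ∈ W).card
          + (Finset.univ.filter fun p : E × Bool =>
              (ept K p ∈ W) ∧ ept K (p.1, !p.2) ∉ W).card := by
    rw [← Finset.filter_filter, ← Finset.filter_filter,
      Finset.card_filter_add_card_filter_not]
  have hS2 :
      (Finset.univ.filter fun p : E × Bool =>
          (ept K p ∈ W) ∧ ept K (p.1, !p.2) ∈ W)
        = (Finset.univ.filter fun e : E => (K e).1 ∈ W ∧ (K e).2 ∈ W) ×ˢ
            (Finset.univ : Finset Bool) := by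
    ext ⟨e, b⟩
    cases b <;> simp [ept, and_comm]
  have hS1 :
      (Finset.univ.filter fun p : E × Bool =>
          (ept K p ∈ W) ∧ ept K (p.1, !p.2) ∉ W).card
        = mcut K W := by
    rw [mcut_eq_card]
    apply Finset.card_bij (fun p _ => p.1)
    · rintro ⟨e, b⟩ hp
      simp only [Finset.mem_filter, Finset.mem_univ, true_and] at hp ⊢
      cases b
      · exact Or.inr ⟨hp.1, hp.2⟩
      · exact Or.inl ⟨hp.1, hp.2⟩
    · rintro ⟨e1, b1⟩ h1 ⟨e2, b2⟩ h2 h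
      simp only at h
      subst h
      simp only [Finset.mem_filter, Finset.mem_univ, true_and] at h1 h2
      by_contra hne
      have hb : b2 = !b1 := by
        cases b1 <;> cases b2 <;> simp_all
      rw [hb] at h2
      exact h1.2 h2.1
    · intro e he
      simp only [Finset.mem_filter, Finset.mem_univ, true_and] at he
      rcases he with ⟨h1, h2⟩ | ⟨h1, h2⟩
      · exact ⟨(e, true), by simp [ept, h1, h2], rfl⟩
      · exact ⟨(e, false), by simp [ept, h1, h2], rfl⟩
  have hev : Even ((Finset.univ.filter fun e : E => (K e).1 ∈ W ∧ (K e).2 ∈ W) ×ˢ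
      (Finset.univ : Finset Bool)).card := by
    rw [Finset.card_product]
    exact ⟨_, by simp [Fintype.card_bool]; ring⟩
  rw [hsplit, hS2, hS1]
  rcases hev with ⟨k, hk⟩
  omega

lemma even_cut_add_cut [Fintype E] [Fintype E'] (G : E → V × V) (H : E' → V × V)
    (euler : MEulerian G H) (W : Set V) : Even (mcut G W + mcut H W) := by
  classical
  set SG := Finset.univ.filter fun p : E × Bool => ept G p ∈ W with hSGdef
  set SH := Finset.univ.filter fun p : E' × Bool => ept H p ∈ W with hSHdef
  set t : Finset V := SG.image (ept G) ∪ SH.image (ept H) with htdef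
  have htW : ∀ v ∈ t, v ∈ W := by
    intro v hv
    rw [htdef, Finset.mem_union] at hv
    rcases hv with hv | hv <;>
    · rw [Finset.mem_image] at hv
      obtain ⟨x, hx, rfl⟩ := hv
      simp only [hSGdef, hSHdef, Finset.mem_filter] at hx
      exact hx.2
  have hG : SG.card = ∑ v ∈ t, mdeg G v := by
    rw [Finset.card_eq_sum_card_fiberwise (f := ept G) (t := t)
      (fun x hx => Finset.mem_union_left _ (Finset.mem_image_of_mem _ hx))]
    apply Finset.sum_congr rfl
    intro v hv
    rw [mdeg_eq]
    congr 1
    ext x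
    simp only [hSGdef, Finset.filter_filter, Finset.mem_filter, Finset.mem_univ, true_and]
    constructor
    · exact fun h => h.2
    · intro h; exact ⟨h ▸ htW v hv, h⟩
  have hH : SH.card = ∑ v ∈ t, mdeg H v := by
    rw [Finset.card_eq_sum_card_fiberwise (f := ept H) (t := t)
      (fun x hx => Finset.mem_union_right _ (Finset.mem_image_of_mem _ hx))]
    apply Finset.sum_congr rfl
    intro v hv
    rw [mdeg_eq]
    congr 1
    ext x
    simp only [hSHdef, Finset.filter_filter, Finset.mem_filter, Finset.mem_univ, true_and]
    constructor
    · exact fun h => h.2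
    · intro h; exact ⟨h ▸ htW v hv, h⟩
  have hev : Even (SG.card + SH.card) := by
    rw [hG, hH, ← Finset.sum_add_distrib]
    exact Finset.even_sum _ (fun v _ => euler v)
  have e1 := ends_parity G W
  have e2 := ends_parity H W
  rw [← hSGdef] at e1
  rw [← hSHdef] at e2
  rw [Nat.even_iff] at hev ⊢
  omega

end Par

namespace MWalk
variable {V E : Type} {G : E → V × V}

def append : {u v w : V} → MWalk G u v → MWalk G v w → MWalk G u w
  | _, _, _, nil _, q => q
  | _, _, _, cons e he p, q => cons e he (p.append q)

lemma edges_append : ∀ {u v w : V} (p : MWalk G u v) (q : MWalk G v w),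
    (p.append q).edges = p.edges ++ q.edges
  | _, _, _, nil _, q => rfl
  | _, _, _, cons e he p, q => by
      simp [append, edges, edges_append p q]

def reverse : {u v : V} → MWalk G u v → MWalk G v u
  | _, _, nil v => nil v
  | _, _, cons e he p => p.reverse.append (cons e he.symm (nil _))

lemma mem_edges_reverse : ∀ {u v : V} (p : MWalk G u v) (e : E),
    e ∈ p.reverse.edges ↔ e ∈ p.edges
  | _, _, nil _, e => Iff.rfl
  | _, _, cons f hf p, e => by
      simp [reverse, edges_append, edges, mem_edges_reverse p e, or_comm]

end MWalk

section Reach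
variable {V E : Type}

/-- Reachability inside `U`. -/
def Reach (G : E → V × V) (U : Set V) (u v : V) : Prop :=
  ∃ p : MWalk G u v, ∀ e ∈ p.edges, (G e).1 ∈ U ∧ (G e).2 ∈ U

lemma Reach.refl (G : E → V × V) (U : Set V) (u : V) : Reach G U u u :=
  ⟨MWalk.nil u, by simp [MWalk.edges]⟩

lemma Reach.symm {G : E → V × V} {U : Set V} {u v : V} (h : Reach G U u v) :
    Reach G U v u := by
  obtain ⟨p, hp⟩ := h
  exact ⟨p.reverse, fun e he => hp e ((MWalk.mem_edges_reverse p e).1 he)⟩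

lemma Reach.trans {G : E → V × V} {U : Set V} {u v w : V}
    (h1 : Reach G U u v) (h2 : Reach G U v w) : Reach G U u w := by
  obtain ⟨p, hp⟩ := h1
  obtain ⟨q, hq⟩ := h2
  refine ⟨p.append q, fun e he => ?_⟩
  rw [MWalk.edges_append, List.mem_append] at he
  exact he.elim (hp e) (hq e)

lemma Reach.step {G : E → V × V} {U : Set V} {u a b : V} (h : Reach G U u a)
    (e : E) (he : G e = (a, b) ∨ G e = (b, a)) (ha : a ∈ U) (hb : b ∈ U) :
    Reach G U u b := by
  refine h.trans ⟨MWalk.cons e he (MWalk.nil b), ?_⟩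
  intro f hf
  simp [MWalk.edges] at hf
  subst hf
  rcases he with he | he <;> simp [he, ha, hb]

end Reach

section Small
variable {V E : Type}

lemma mcut_zero_iff [Fintype E] (K : E → V × V) (W : Set V) :
    mcut K W = 0 ↔ crossSet K W = ∅ := by
  rw [mcut_eq_ncard, Set.ncard_eq_zero (Set.toFinite _)]

lemma walk_closed [Fintype E] (K : E → V × V) (W : Set V) (h : mcut K W = 0) :
    ∀ {a b : V}, MWalk K a b → a ∈ W → b ∈ W := by
  rw [mcut_zero_iff] at h
  intro a b w
  induction w with
  | nil v => exact id
  | cons e he tail ih =>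
    intro ha
    apply ih
    by_contra hx
    have : e ∈ crossSet K W := by
      rcases he with he | he
      · exact Or.inl ⟨by rw [he]; exact ha, by rw [he]; exact hx⟩
      · exact Or.inr ⟨by rw [he]; exact ha, by rw [he]; exact hx⟩
    rw [h] at this
    exact this

lemma exists_not_mem_of_mcut_ne_zero [Fintype E] (K : E → V × V) (W : Set V)
    (h : mcut K W ≠ 0) : ∃ v, v ∉ W := by
  rw [mcut_eq_ncard] at h
  obtain ⟨e, he⟩ := Set.nonempty_of_ncard_ne_zero h
  rcases he with ⟨_, h2⟩ | ⟨_, h2⟩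
  · exact ⟨(K e).2, h2⟩
  · exact ⟨(K e).1, h2⟩

lemma mcut_ne_zero_of_sep [Fintype E] {K : E → V × V} (hconn : MConnected K)
    {W : Set V} {a b : V} (ha : a ∈ W) (hb : b ∉ W) : mcut K W ≠ 0 := by
  intro h
  obtain ⟨w⟩ := hconn a b
  exact hb (walk_closed K W h w ha)

end Small

/-- Let `(G, H)` be a feasible Eulerian instance with three
pairs of terminals and terminal set `T`, with `G` connected, and let
`p, q ∈ T`. Suppose some `U' ⊆ VG` satisfies `d_G(U') = d_H(U') = 2`, `G[U']`
connected and `U' ∩ T = {p, q}`. If `U` is inclusion-wise maximal among all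
sets `W ⊆ VG` with `W ∩ T = {p, q}` and `d_G(W) = 2`, then `G[U]` is
connected. -/
theorem statement17 {V E : Type} [Fintype E]
    (G : E → V × V) (s1 t1 s2 t2 s3 t3 : V)
    (H : Fin 3 → V × V) (hH : H = ![(s1, t1), (s2, t2), (s3, t3)])
    (T : Set V) (hT : T = {s1, s2, s3, t1, t2, t3})
    (euler : MEulerian G H)
    (hfeas : MFeasible G H)
    (hconn : MConnected G)
    (p q : V) (hp : p ∈ T) (hq : q ∈ T)
    (U' : Set V) (hU'G : mcut G U' = 2) (hU'H : mcut H U' = 2)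
    (hU'conn : MInducedConnected G U') (hU'T : U' ∩ T = {p, q})
    (U : Set V) (hUT : U ∩ T = {p, q}) (hUG : mcut G U = 2)
    (hUmax : ∀ W : Set V, W ∩ T = {p, q} → mcut G W = 2 → U ⊆ W → W = U) :
    MInducedConnected G U := by
  classical
  have hpm : p ∈ ({p, q} : Set V) := Or.inl rfl
  have hqm : q ∈ ({p, q} : Set V) := Or.inr rfl
  have hpU : p ∈ U := by have : p ∈ U ∩ T := hUT ▸ hpm; exact this.1
  have hqU : q ∈ U := by have : q ∈ U ∩ T := hUT ▸ hqm; exact this.1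
  have hpU' : p ∈ U' := by have : p ∈ U' ∩ T := hU'T ▸ hpm; exact this.1
  have hqU' : q ∈ U' := by have : q ∈ U' ∩ T := hU'T ▸ hqm; exact this.1
  have hHT : ∀ i : Fin 3, (H i).1 ∈ T ∧ (H i).2 ∈ T := by
    subst hH hT
    intro i
    fin_cases i <;> constructor <;> simp
  -- the demand cut depends only on the T-trace
  have hHcut : ∀ W : Set V, W ∩ T = {p, q} → mcut H W = 2 := by
    intro W hW
    rw [← hU'H]
    unfold mcut
    congr 1
    ext i
    have key : ∀ v ∈ T, (v ∈ W ↔ v ∈ U') := by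
      intro v hv
      constructor
      · intro h
        have h1 : v ∈ W ∩ T := ⟨h, hv⟩
        rw [hW, ← hU'T] at h1
        exact h1.1
      · intro h
        have h1 : v ∈ U' ∩ T := ⟨h, hv⟩
        rw [hU'T, ← hW] at h1
        exact h1.1
    have k1 := key _ (hHT i).1
    have k2 := key _ (hHT i).2
    simp only [Set.mem_setOf_eq]
    tauto
  have parity : ∀ W : Set V, (mcut G W + mcut H W) % 2 = 0 := by
    intro W
    have := even_cut_add_cut G H euler W
    rwa [Nat.even_iff] at this
  -- Step A : U' ⊆ U via uncrossing and maximality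
  have hwT : (U ∪ U') ∩ T = {p, q} := by
    ext v
    constructor
    · rintro ⟨hv | hv, hvT⟩
      · rw [← hUT]; exact ⟨hv, hvT⟩
      · rw [← hU'T]; exact ⟨hv, hvT⟩
    · intro hv
      have h1 : v ∈ U ∩ T := hUT ▸ hv
      exact ⟨Or.inl h1.1, h1.2⟩
  have hiT : (U ∩ U') ∩ T = {p, q} := by
    ext v
    constructor
    · rintro ⟨⟨hv, _⟩, hvT⟩
      rw [← hUT]; exact ⟨hv, hvT⟩
    · intro hv
      have h1 : v ∈ U ∩ T := hUT ▸ hv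
      have h2 : v ∈ U' ∩ T := hU'T ▸ hv
      exact ⟨⟨h1.1, h2.1⟩, h1.2⟩
  have hunionH : mcut H (U ∪ U') = 2 := hHcut _ hwT
  have hinterH : mcut H (U ∩ U') = 2 := hHcut _ hiT
  have hamod : mcut G (U ∪ U') % 2 = 0 := by
    have := parity (U ∪ U'); rw [hunionH] at this; omega
  have hbmod : mcut G (U ∩ U') % 2 = 0 := by
    have := parity (U ∩ U'); rw [hinterH] at this; omega
  obtain ⟨v1, hv1⟩ : ∃ v, v ∉ U ∪ U' :=
    exists_not_mem_of_mcut_ne_zero H (U ∪ U') (by rw [hunionH]; norm_num)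
  have hane : mcut G (U ∪ U') ≠ 0 :=
    mcut_ne_zero_of_sep hconn (Or.inl hpU) hv1
  have hbne : mcut G (U ∩ U') ≠ 0 :=
    mcut_ne_zero_of_sep hconn ⟨hpU, hpU'⟩ (fun h => hv1 (Or.inl h.1))
  have hsub := mcut_submod G U U'
  rw [hUG, hU'G] at hsub
  have haeq : mcut G (U ∪ U') = 2 := by omega
  have hU'U : U' ⊆ U := by
    have := hUmax (U ∪ U') hwT haeq Set.subset_union_left
    rw [← this]
    exact Set.subset_union_right
  -- Step B
  have hpq : Reach G U p q := by
    obtain ⟨w, hw⟩ := hU'conn p hpU' q hqU'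
    exact ⟨w, fun e he => ⟨hU'U (hw e he).1, hU'U (hw e he).2⟩⟩
  obtain ⟨v0, hv0⟩ : ∃ v, v ∉ U :=
    exists_not_mem_of_mcut_ne_zero G U (by rw [hUG]; norm_num)
  have compCross : ∀ x, crossSet G {v | v ∈ U ∧ Reach G U x v} ⊆ crossSet G U := by
    intro x e he
    rcases he with ⟨h1, h2⟩ | ⟨h1, h2⟩
    · obtain ⟨hm, hr⟩ := h1
      refine Or.inl ⟨hm, fun hU2 => h2 ?_⟩
      exact ⟨hU2, hr.step e (Or.inl rfl) hm hU2⟩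
    · obtain ⟨hm, hr⟩ := h1
      refine Or.inr ⟨hm, fun hU1 => h2 ?_⟩
      exact ⟨hU1, hr.step e (Or.inr rfl) hm hU1⟩
  have main : ∀ u ∈ U, Reach G U p u := by
    intro u hu
    by_contra hnr
    set C := {v | v ∈ U ∧ Reach G U u v} with hC
    have huC : u ∈ C := ⟨hu, Reach.refl _ _ _⟩
    have hpC : p ∉ C := fun h => hnr h.2.symm
    have hqC : q ∉ C := fun h => hnr (hpq.trans h.2.symm)
    have hCH : mcut H C = 0 := by
      rw [mcut_zero_iff]
      ext i
      simp only [crossSet, Set.mem_setOf_eq, Set.mem_empty_iff_false, iff_false]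
      rintro (⟨h1, _⟩ | ⟨h1, _⟩)
      · have hm : (H i).1 ∈ U ∩ T := ⟨h1.1, (hHT i).1⟩
        rw [hUT] at hm
        rcases hm with hm | hm
        · exact hpC (hm ▸ h1)
        · exact hqC (hm ▸ h1)
      · have hm : (H i).2 ∈ U ∩ T := ⟨h1.1, (hHT i).2⟩
        rw [hUT] at hm
        rcases hm with hm | hm
        · exact hpC (hm ▸ h1)
        · exact hqC (hm ▸ h1)
    have hCsub := compCross u
    rw [← hC] at hCsub
    have hCle : mcut G C ≤ 2 := by
      rw [mcut_eq_ncard, ← hUG, mcut_eq_ncard]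
      exact Set.ncard_le_ncard hCsub (Set.toFinite _)
    have hCmod : mcut G C % 2 = 0 := by
      have := parity C; rw [hCH] at this; omega
    have hCne : mcut G C ≠ 0 :=
      mcut_ne_zero_of_sep hconn huC (fun h => hv0 h.1)
    have hCeq : mcut G C = 2 := by omega
    have hcrossEq : crossSet G C = crossSet G U := by
      apply Set.eq_of_subset_of_ncard_le hCsub _ (Set.toFinite _)
      rw [← mcut_eq_ncard, ← mcut_eq_ncard, hCeq, hUG]
    set Cp := {v | v ∈ U ∧ Reach G U p v} with hCp
    have hCpzero : mcut G Cp = 0 := by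
      rw [mcut_zero_iff]
      ext e
      simp only [Set.mem_empty_iff_false, iff_false]
      intro he
      have heU : e ∈ crossSet G U := compCross p he
      have heC : e ∈ crossSet G C := hcrossEq ▸ heU
      rcases he with ⟨⟨hm1, hr1⟩, h2⟩ | ⟨⟨hm1, hr1⟩, h2⟩
      · have h2U : (G e).2 ∉ U := by
          rcases heU with ⟨_, hy⟩ | ⟨_, hy⟩
          · exact hy
          · exact absurd hm1 hy
        rcases heC with ⟨⟨hxm, hxr⟩, _⟩ | ⟨⟨hxm, hxr⟩, _⟩
        · exact hnr (hr1.trans hxr.symm)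
        · exact h2U hxm
      · have h1U : (G e).1 ∉ U := by
          rcases heU with ⟨_, hy⟩ | ⟨_, hy⟩
          · exact absurd hm1 hy
          · exact hy
        rcases heC with ⟨⟨hxm, hxr⟩, _⟩ | ⟨⟨hxm, hxr⟩, _⟩
        · exact h1U hxm
        · exact hnr (hr1.trans hxr.symm)
    obtain ⟨w⟩ := hconn p v0
    exact hv0 (walk_closed G Cp hCpzero w ⟨hpU, Reach.refl _ _ _⟩).1
  intro u hu v hv
  obtain ⟨w1, h1⟩ := (main u hu).symm
  obtain ⟨w2, h2⟩ := main v hv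
  refine ⟨w1.append w2, fun e he => ?_⟩
  rw [MWalk.edges_append, List.mem_append] at he
  exact he.elim (h1 e) (h2 e)
end
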